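/- Let A be an n×n Hermitian matrix with m·I ≤ A ≤ M·I, 0 < m ≤ M, and let X, Y be n×k isometries with X*Y = 0. For p > 1/2, set Γ = ((X*AY)(Y*AY)^{-1}(Y*AX))^p · (X*AX)^{-p}. Then ‖Γ‖ ≤ ((M−m)/(M+m))^{2p} · (M/m)^p. -/

import Mathlib

open Matrix
open scoped ComplexOrder
open scoped Matrix.Norms.L2Operator


lemma kant_real (m M E1 E2 σ : ℝ) (hm : 0 < m) (hmM : m ≤ M) (hσ : 0 < σ)
    (hf : 0 ≤ E2 - m*E1 + m^2*σ) (hg : 0 ≤ E2 - M*E1 + M^2*σ)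
    (hlo : 2*m*σ ≤ E1) (hhi : E1 ≤ 2*M*σ) (hd : 0 ≤ E1^2 - 4*E2*σ) :
    0 ≤ (M+m)^2*E2*σ - m*M*E1^2 := by
  set D := E1^2 - 4*E2*σ with hD
  have hr0 : 0 ≤ Real.sqrt D := Real.sqrt_nonneg _
  have hr2 : Real.sqrt D ^ 2 = D := Real.sq_sqrt hd
  have h1 : Real.sqrt D ≤ E1 - 2*m*σ := by
    have hle : D ≤ (E1 - 2*m*σ)^2 := by nlinarith [mul_nonneg hf hσ.le]
    calc Real.sqrt D ≤ Real.sqrt ((E1 - 2*m*σ)^2) := Real.sqrt_le_sqrt hle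
      _ = E1 - 2*m*σ := Real.sqrt_sq (by linarith)
  have h2 : Real.sqrt D ≤ 2*M*σ - E1 := by
    have hle : D ≤ (2*M*σ - E1)^2 := by nlinarith [mul_nonneg hg hσ.le]
    calc Real.sqrt D ≤ Real.sqrt ((2*M*σ - E1)^2) := Real.sqrt_le_sqrt hle
      _ = 2*M*σ - E1 := Real.sqrt_sq (by linarith)
  have key : (M+m) * Real.sqrt D ≤ (M-m) * E1 := by
    rcases le_total E1 ((M+m)*σ) with h | h
    · nlinarith
    · nlinarith
  have sq : (M+m)^2 * D ≤ (M-m)^2 * E1^2 := by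
    have h0 : 0 ≤ (M+m) * Real.sqrt D := mul_nonneg (by linarith) hr0
    nlinarith [key, h0]
  nlinarith [sq]

lemma key_real (m M s q a b R : ℝ) (hm : 0 < m) (hmM : m ≤ M)
    (hs : 0 < s) (hq : 0 < q)
    (ha1 : m * s ≤ a) (ha2 : a ≤ M * s) (hb1 : m * q ≤ b) (hb2 : b ≤ M * q)
    (hR : 0 ≤ R) (hC1 : R ≤ (a - m*s) * (b - m*q)) (hC2 : R ≤ (M*s - a) * (M*q - b)) :
    R * (M+m)^2 ≤ (M-m)^2 * (a*b) := by
  have hσ : 0 < s * q := mul_pos hs hq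
  have hk := kant_real m M (a*q + b*s) (a*b - R) (s*q) hm hmM hσ
    (by nlinarith) (by nlinarith)
    (by nlinarith [mul_nonneg (sub_nonneg.2 ha1) hq.le, mul_nonneg (sub_nonneg.2 hb1) hs.le])
    (by nlinarith [mul_nonneg (sub_nonneg.2 ha2) hq.le, mul_nonneg (sub_nonneg.2 hb2) hs.le])
    (by nlinarith [sq_nonneg (a*q - b*s), mul_nonneg hR hσ.le])
  nlinarith [hk, sq_nonneg (a*q - b*s), mul_pos hm (hm.trans_le hmM)]


lemma cs_vec {n : ℕ} (u v : Fin n → ℂ) :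
    Complex.normSq (star u ⬝ᵥ v) ≤ (star u ⬝ᵥ u).re * (star v ⬝ᵥ v).re := by
  set u' : EuclideanSpace ℂ (Fin n) := (WithLp.equiv 2 _).symm u with hu'
  set v' : EuclideanSpace ℂ (Fin n) := (WithLp.equiv 2 _).symm v with hv'
  have h : ‖star u ⬝ᵥ v‖ ≤ ‖u'‖ * ‖v'‖ := by
    have := norm_inner_le_norm (𝕜 := ℂ) u' v'
    rwa [show inner ℂ u' v' = star u ⬝ᵥ v from
      (EuclideanSpace.inner_toLp_toLp u v).trans (dotProduct_comm _ _)] at this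
  have hu : ‖u'‖ ^ 2 = (star u ⬝ᵥ u).re := by
    have := norm_sq_eq_re_inner (𝕜 := ℂ) u'
    rw [show inner ℂ u' u' = star u ⬝ᵥ u from
      (EuclideanSpace.inner_toLp_toLp u u).trans (dotProduct_comm _ _)] at this
    exact this
  have hv : ‖v'‖ ^ 2 = (star v ⬝ᵥ v).re := by
    have := norm_sq_eq_re_inner (𝕜 := ℂ) v'
    rw [show inner ℂ v' v' = star v ⬝ᵥ v from
      (EuclideanSpace.inner_toLp_toLp v v).trans (dotProduct_comm _ _)] at this
    exact this
  have h2 := mul_self_le_mul_self (norm_nonneg _) h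
  have h3 : Complex.normSq (star u ⬝ᵥ v) = ‖star u ⬝ᵥ v‖ * ‖star u ⬝ᵥ v‖ := by
    simp [Complex.normSq_eq_norm_sq, sq]
  nlinarith [h2, h3, hu, hv]


lemma cs_psd {n : ℕ} {N : Matrix (Fin n) (Fin n) ℂ} (hN : N.PosSemidef) (x y : Fin n → ℂ) :
    Complex.normSq (star x ⬝ᵥ N *ᵥ y) ≤ (star x ⬝ᵥ N *ᵥ x).re * (star y ⬝ᵥ N *ᵥ y).re := by
  obtain ⟨C, rfl⟩ : ∃ C : Matrix (Fin n) (Fin n) ℂ, N = Cᴴ * C := by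
    open scoped MatrixOrder in
    exact CStarAlgebra.nonneg_iff_eq_star_mul_self.mp hN.nonneg
  have key : ∀ w z : Fin n → ℂ, star w ⬝ᵥ (Cᴴ * C) *ᵥ z = star (C *ᵥ w) ⬝ᵥ (C *ᵥ z) := by
    intro w z
    rw [Matrix.star_mulVec, ← Matrix.dotProduct_mulVec, Matrix.mulVec_mulVec]
  rw [key, key, key]
  exact cs_vec _ _


lemma wielandt {n : ℕ} (A : Matrix (Fin n) (Fin n) ℂ) (m M : ℝ) (hm : 0 < m) (hmM : m ≤ M)
    (h1 : (A - m • (1 : Matrix (Fin n) (Fin n) ℂ)).PosSemidef)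
    (h2 : ((M • (1 : Matrix (Fin n) (Fin n) ℂ)) - A).PosSemidef)
    (x y : Fin n → ℂ) (hxy : star x ⬝ᵥ y = 0) :
    Complex.normSq (star x ⬝ᵥ A *ᵥ y) * (M+m)^2 ≤
      (M-m)^2 * ((star x ⬝ᵥ A *ᵥ x).re * (star y ⬝ᵥ A *ᵥ y).re) := by
  have F1 : ∀ w z : Fin n → ℂ, star w ⬝ᵥ (A - m • (1 : Matrix (Fin n) (Fin n) ℂ)) *ᵥ z
      = star w ⬝ᵥ A *ᵥ z - m • (star w ⬝ᵥ z) := by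
    intro w z
    rw [Matrix.sub_mulVec, dotProduct_sub, Matrix.smul_mulVec, Matrix.one_mulVec,
      dotProduct_smul]
  have F2 : ∀ w z : Fin n → ℂ, star w ⬝ᵥ ((M • (1 : Matrix (Fin n) (Fin n) ℂ)) - A) *ᵥ z
      = M • (star w ⬝ᵥ z) - star w ⬝ᵥ A *ᵥ z := by
    intro w z
    rw [Matrix.sub_mulVec, dotProduct_sub, Matrix.smul_mulVec, Matrix.one_mulVec,
      dotProduct_smul]
  by_cases hx : x = 0
  · simp [hx]
  by_cases hy : y = 0
  · simp [hy]
  set s := (star x ⬝ᵥ x).re with hs_def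
  set q := (star y ⬝ᵥ y).re with hq_def
  set a := (star x ⬝ᵥ A *ᵥ x).re with ha_def
  set b := (star y ⬝ᵥ A *ᵥ y).re with hb_def
  set r := star x ⬝ᵥ A *ᵥ y with hr_def
  have hs : 0 < s := (Complex.lt_def.mp (Matrix.dotProduct_star_self_pos_iff.mpr hx)).1
  have hq : 0 < q := (Complex.lt_def.mp (Matrix.dotProduct_star_self_pos_iff.mpr hy)).1
  have hre1 : ∀ w : Fin n → ℂ, 0 ≤ (star w ⬝ᵥ A *ᵥ w).re - m * (star w ⬝ᵥ w).re := by
    intro w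
    have h := (Complex.le_def.mp (h1.dotProduct_mulVec_nonneg w)).1
    rw [F1] at h
    simpa [Complex.sub_re, Complex.smul_re] using h
  have hre2 : ∀ w : Fin n → ℂ, 0 ≤ M * (star w ⬝ᵥ w).re - (star w ⬝ᵥ A *ᵥ w).re := by
    intro w
    have h := (Complex.le_def.mp (h2.dotProduct_mulVec_nonneg w)).1
    rw [F2] at h
    simpa [Complex.sub_re, Complex.smul_re] using h
  have ha1 : m * s ≤ a := by have := hre1 x; rw [← ha_def, ← hs_def] at this; linarith
  have ha2 : a ≤ M * s := by have := hre2 x; rw [← ha_def, ← hs_def] at this; linarith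
  have hb1 : m * q ≤ b := by have := hre1 y; rw [← hb_def, ← hq_def] at this; linarith
  have hb2 : b ≤ M * q := by have := hre2 y; rw [← hb_def, ← hq_def] at this; linarith
  have hC1 : Complex.normSq r ≤ (a - m*s) * (b - m*q) := by
    have h := cs_psd h1 x y
    rw [F1 x y, hxy, smul_zero, sub_zero] at h
    rw [F1 x x, F1 y y] at h
    simpa [Complex.sub_re, Complex.smul_re, ← ha_def, ← hb_def, ← hs_def, ← hq_def,
      mul_comm] using h
  have hC2 : Complex.normSq r ≤ (M*s - a) * (M*q - b) := by
    have h := cs_psd h2 x y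
    rw [F2 x y, hxy, smul_zero, zero_sub, Complex.normSq_neg] at h
    rw [F2 x x, F2 y y] at h
    simpa [Complex.sub_re, Complex.smul_re, ← ha_def, ← hb_def, ← hs_def, ← hq_def,
      mul_comm] using h
  have := key_real m M s q a b (Complex.normSq r) hm hmM hs hq ha1 ha2 hb1 hb2
    (Complex.normSq_nonneg r) hC1 hC2
  linarith


lemma exists_eigvec {k : ℕ} {N : Matrix (Fin k) (Fin k) ℂ} (hN : N.IsHermitian) {x : ℝ}
    (hx : x ∈ spectrum ℝ N) : ∃ v : Fin k → ℂ, v ≠ 0 ∧ N *ᵥ v = x • v := by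
  rw [hN.spectrum_real_eq_range_eigenvalues] at hx
  obtain ⟨i, hi⟩ := hx
  refine ⟨(WithLp.equiv 2 _) (hN.eigenvectorBasis i), ?_, ?_⟩
  · simpa using hN.eigenvectorBasis.toBasis.ne_zero i
  · have h := hN.mulVec_eigenvectorBasis i
    rw [hi] at h
    exact h

lemma form_of_eigvec {k : ℕ} {N : Matrix (Fin k) (Fin k) ℂ} {x : ℝ} {v : Fin k → ℂ}
    (hv : N *ᵥ v = x • v) : (star v ⬝ᵥ N *ᵥ v).re = x * (star v ⬝ᵥ v).re := by
  rw [hv, dotProduct_smul, Complex.smul_re]; rfl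


lemma final_alg (m M p : ℝ) (hm : 0 < m) (hM : 0 < M) (hmM : m ≤ M) (hp0 : 0 < p) :
    ((M-m)^2 * M / (M+m)^2) ^ p * m ^ (-p) = ((M - m) / (M + m)) ^ (2 * p) * (M / m) ^ p := by
  have hMm : 0 < M + m := by linarith
  have hc : (0:ℝ) ≤ (M-m)/(M+m) := div_nonneg (by linarith) (by linarith)
  have h1 : (M-m)^2 * M / (M+m)^2 = ((M-m)/(M+m))^2 * M := by field_simp
  have h2 : ((M-m)/(M+m)) ^ ((2:ℝ)*p) = (((M-m)/(M+m))^(2:ℕ)) ^ p := by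
    rw [Real.rpow_natCast ((M-m)/(M+m)) 2 |>.symm, ← Real.rpow_mul hc]
    norm_num
  rw [h1, Real.mul_rpow (by positivity) hM.le, h2, Real.rpow_neg hm.le,
    Real.div_rpow hM.le hm.le]
  ring


set_option maxHeartbeats 1000000

noncomputable instance mycstar {k : ℕ} : CStarAlgebra (Matrix (Fin k) (Fin k) ℂ) where
  toNormedRing := Matrix.instL2OpNormedRing
  toStarRing := inferInstance
  toCStarRing := Matrix.instCStarRing
  toNormedAlgebra := Matrix.instL2OpNormedAlgebra
  toStarModule := inferInstance
  toCompleteSpace := FiniteDimensional.complete ℂ _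

-- general conjugation of quadratic forms
lemma conjform {a b : ℕ} (S : Matrix (Fin a) (Fin a) ℂ) (W Z : Matrix (Fin a) (Fin b) ℂ)
    (v w : Fin b → ℂ) :
    star v ⬝ᵥ (Wᴴ * S * Z) *ᵥ w = star (W *ᵥ v) ⬝ᵥ S *ᵥ (Z *ᵥ w) := by
  simp only [Matrix.star_mulVec, Matrix.dotProduct_mulVec, Matrix.vecMul_vecMul,
    Matrix.mul_assoc]

theorem norm_Gamma_le_of_half_lt_p
    {n k : ℕ} (A : Matrix (Fin n) (Fin n) ℂ) (hA : A.IsHermitian)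
    (m M : ℝ) (hm : 0 < m) (hmM : m ≤ M)
    (h1 : (A - m • (1 : Matrix (Fin n) (Fin n) ℂ)).PosSemidef)
    (h2 : ((M • (1 : Matrix (Fin n) (Fin n) ℂ)) - A).PosSemidef)
    (X Y : Matrix (Fin n) (Fin k) ℂ)
    (hX : Xᴴ * X = 1) (hY : Yᴴ * Y = 1) (hXY : Xᴴ * Y = 0)
    (p : ℝ) (hp : 1 / 2 < p) :
    ‖cfc (fun x : ℝ => x ^ p) ((Xᴴ * A * Y) * (Yᴴ * A * Y)⁻¹ * (Yᴴ * A * X))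
        * cfc (fun x : ℝ => x ^ (-p)) (Xᴴ * A * X)‖ ≤
      ((M - m) / (M + m)) ^ (2 * p) * (M / m) ^ p := by
  have hM : 0 < M := hm.trans_le hmM
  have hMm : 0 < M + m := by linarith
  have hp0 : 0 < p := by linarith
  -- abbreviations
  set B : Matrix (Fin k) (Fin k) ℂ := Xᴴ * A * Y with hB_def
  set K : Matrix (Fin k) (Fin k) ℂ := Yᴴ * A * Y with hK_def
  set H : Matrix (Fin k) (Fin k) ℂ := Xᴴ * A * X with hH_def
  have hBH : Bᴴ = Yᴴ * A * X := by
    simp [hB_def, Matrix.conjTranspose_mul, Matrix.mul_assoc, hA.eq]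
  rw [← hBH]
  set L : Matrix (Fin k) (Fin k) ℂ := B * K⁻¹ * Bᴴ with hL_def
  -- basic form decompositions
  have F1 : ∀ w : Fin n → ℂ, star w ⬝ᵥ (A - m • (1 : Matrix (Fin n) (Fin n) ℂ)) *ᵥ w
      = star w ⬝ᵥ A *ᵥ w - m • (star w ⬝ᵥ w) := by
    intro w
    rw [Matrix.sub_mulVec, dotProduct_sub, Matrix.smul_mulVec, Matrix.one_mulVec,
      dotProduct_smul]
  have F2 : ∀ w : Fin n → ℂ, star w ⬝ᵥ ((M • (1 : Matrix (Fin n) (Fin n) ℂ)) - A) *ᵥ w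
      = M • (star w ⬝ᵥ w) - star w ⬝ᵥ A *ᵥ w := by
    intro w
    rw [Matrix.sub_mulVec, dotProduct_sub, Matrix.smul_mulVec, Matrix.one_mulVec,
      dotProduct_smul]
  have hAlo : ∀ w : Fin n → ℂ, m * (star w ⬝ᵥ w).re ≤ (star w ⬝ᵥ A *ᵥ w).re := by
    intro w
    have h := (Complex.le_def.mp (h1.dotProduct_mulVec_nonneg w)).1
    rw [F1] at h
    simp only [Complex.zero_re, Complex.sub_re, Complex.smul_re, smul_eq_mul] at h
    linarith [h]
  have hAhi : ∀ w : Fin n → ℂ, (star w ⬝ᵥ A *ᵥ w).re ≤ M * (star w ⬝ᵥ w).re := by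
    intro w
    have h := (Complex.le_def.mp (h2.dotProduct_mulVec_nonneg w)).1
    rw [F2] at h
    simp only [Complex.zero_re, Complex.sub_re, Complex.smul_re, smul_eq_mul] at h
    linarith [h]
  -- isometry facts
  have hXnorm : ∀ v : Fin k → ℂ, star (X *ᵥ v) ⬝ᵥ (X *ᵥ v) = star v ⬝ᵥ v := by
    intro v
    have h := conjform 1 X X v v
    simpa [hX] using h.symm
  have hYnorm : ∀ v : Fin k → ℂ, star (Y *ᵥ v) ⬝ᵥ (Y *ᵥ v) = star v ⬝ᵥ v := by
    intro v
    have h := conjform 1 Y Y v v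
    simpa [hY] using h.symm
  -- K is positive definite
  have hK_herm : K.IsHermitian := by
    simp [Matrix.IsHermitian, hK_def, Matrix.conjTranspose_mul, Matrix.mul_assoc, hA.eq]
  have hKpd : K.PosDef := by
    refine Matrix.PosDef.of_dotProduct_mulVec_pos hK_herm fun v hv => ?_
    have hYv : Y *ᵥ v ≠ 0 := by
      intro h0
      apply hv
      have : (Yᴴ * Y) *ᵥ v = Yᴴ *ᵥ (Y *ᵥ v) := (Matrix.mulVec_mulVec _ _ _).symm
      rw [hY, h0, Matrix.one_mulVec, Matrix.mulVec_zero] at this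
      exact this
    have hform : star v ⬝ᵥ K *ᵥ v = star (Y *ᵥ v) ⬝ᵥ A *ᵥ (Y *ᵥ v) := conjform A Y Y v v
    rw [hform]
    have hlo := hAlo (Y *ᵥ v)
    have him : (star (Y *ᵥ v) ⬝ᵥ A *ᵥ (Y *ᵥ v)).im = 0 := by
      have h := (Complex.le_def.mp (h1.dotProduct_mulVec_nonneg (Y *ᵥ v))).2
      have h' := (Complex.le_def.mp (dotProduct_star_self_nonneg (Y *ᵥ v))).2
      rw [F1] at h
      simp only [Complex.zero_im, Complex.sub_im, Complex.smul_im, smul_eq_mul] at h h' ⊢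
      rw [← h'] at h
      simpa using h.symm
    have hpos : 0 < (star (Y *ᵥ v) ⬝ᵥ (Y *ᵥ v)).re := by
      have := Complex.lt_def.mp (Matrix.dotProduct_star_self_pos_iff.mpr hYv)
      simpa using this.1
    rw [Complex.lt_def]
    constructor
    · simp only [Complex.zero_re]
      nlinarith [hlo, hpos, mul_pos hm hpos]
    · simp only [Complex.zero_im]
      exact him.symm
  have hKK : K * K⁻¹ = 1 := Matrix.mul_nonsing_inv K hKpd.det_pos.ne'.isUnit
  have hKK' : K⁻¹ * K = 1 := Matrix.nonsing_inv_mul K hKpd.det_pos.ne'.isUnit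
  have hKinvH : K⁻¹ᴴ = K⁻¹ := (hK_herm.inv).eq
  -- L is PSD
  have hLpsd : L.PosSemidef := (hKpd.inv.posSemidef).mul_mul_conjTranspose_same B
  -- quadratic form bound for L
  have hLform : ∀ v : Fin k → ℂ,
      (star v ⬝ᵥ L *ᵥ v).re * (M+m)^2 ≤ (M-m)^2 * M * (star v ⬝ᵥ v).re := by
    intro v
    set u : Fin k → ℂ := (K⁻¹ * Bᴴ) *ᵥ v with hu_def
    have hu1 : L *ᵥ v = B *ᵥ u := by
      rw [hu_def, Matrix.mulVec_mulVec, ← Matrix.mul_assoc]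
    have hids : (K⁻¹ * Bᴴ)ᴴ * K * (K⁻¹ * Bᴴ) = L := by
      rw [Matrix.conjTranspose_mul, Matrix.conjTranspose_conjTranspose, hKinvH]
      calc B * K⁻¹ * K * (K⁻¹ * Bᴴ) = B * (K⁻¹ * K) * K⁻¹ * Bᴴ := by
            simp only [Matrix.mul_assoc]
        _ = L := by rw [hKK', Matrix.mul_one, hL_def]
    have hFactB : star u ⬝ᵥ K *ᵥ u = star v ⬝ᵥ L *ᵥ v := by
      rw [hu_def, ← conjform K (K⁻¹ * Bᴴ) (K⁻¹ * Bᴴ) v v, hids]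
    have hxy' : star (X *ᵥ v) ⬝ᵥ (Y *ᵥ u) = 0 := by
      have h := conjform 1 X Y v u
      simp only [Matrix.mul_one] at h
      rw [Matrix.one_mulVec] at h
      rw [← h]
      simp [hXY]
    have hcross : star (X *ᵥ v) ⬝ᵥ A *ᵥ (Y *ᵥ u) = star v ⬝ᵥ L *ᵥ v := by
      rw [← conjform A X Y v u, ← hB_def, hu1]
    have hyform : star (Y *ᵥ u) ⬝ᵥ A *ᵥ (Y *ᵥ u) = star v ⬝ᵥ L *ᵥ v := by
      rw [← conjform A Y Y u u, ← hK_def]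
      exact hFactB
    have hW := wielandt A m M hm hmM h1 h2 (X *ᵥ v) (Y *ᵥ u) hxy'
    rw [hcross, hyform] at hW
    set F := star v ⬝ᵥ L *ᵥ v with hF_def
    have hF0 : 0 ≤ F := hLpsd.dotProduct_mulVec_nonneg v
    have hFre : 0 ≤ F.re := (Complex.le_def.mp hF0).1
    have hFim : F.im = 0 := ((Complex.le_def.mp hF0).2).symm
    have hnormSq : Complex.normSq F = F.re * F.re := by
      rw [Complex.normSq_apply, hFim]; ring
    rw [hnormSq] at hW
    have haH : (star (X *ᵥ v) ⬝ᵥ A *ᵥ (X *ᵥ v)).re ≤ M * (star v ⬝ᵥ v).re := by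
      have := hAhi (X *ᵥ v)
      rwa [hXnorm v] at this
    have haH0 : 0 ≤ (star (X *ᵥ v) ⬝ᵥ A *ᵥ (X *ᵥ v)).re := by
      have h := hAlo (X *ᵥ v)
      rw [hXnorm v] at h
      have hvv : 0 ≤ (star v ⬝ᵥ v).re :=
        (Complex.le_def.mp (dotProduct_star_self_nonneg v)).1
      nlinarith
    have hvv : 0 ≤ (star v ⬝ᵥ v).re :=
      (Complex.le_def.mp (dotProduct_star_self_nonneg v)).1
    rcases eq_or_lt_of_le hFre with hF | hF
    · rw [← hF]
      have : 0 ≤ (M-m)^2 * M * (star v ⬝ᵥ v).re := by positivity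
      linarith
    · have step : (M-m)^2 * ((star (X *ᵥ v) ⬝ᵥ A *ᵥ (X *ᵥ v)).re * F.re)
          ≤ ((M-m)^2 * M * (star v ⬝ᵥ v).re) * F.re := by
        nlinarith [mul_nonneg (mul_nonneg (sq_nonneg (M-m)) (sub_nonneg.mpr haH)) hF.le]
      have final : (F.re * (M+m)^2) * F.re ≤ ((M-m)^2 * M * (star v ⬝ᵥ v).re) * F.re := by
        nlinarith [hW, step]
      exact le_of_mul_le_mul_right final hF
  -- H form bounds
  have hH_herm : H.IsHermitian := by
    simp [Matrix.IsHermitian, hH_def, Matrix.conjTranspose_mul, Matrix.mul_assoc, hA.eq]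
  have hHlo : ∀ v : Fin k → ℂ, m * (star v ⬝ᵥ v).re ≤ (star v ⬝ᵥ H *ᵥ v).re := by
    intro v
    rw [hH_def, conjform A X X v v]
    have := hAlo (X *ᵥ v)
    rwa [hXnorm v] at this
  have hHhi : ∀ v : Fin k → ℂ, (star v ⬝ᵥ H *ᵥ v).re ≤ M * (star v ⬝ᵥ v).re := by
    intro v
    rw [hH_def, conjform A X X v v]
    have := hAhi (X *ᵥ v)
    rwa [hXnorm v] at this
  -- spectrum bounds
  have hvvpos : ∀ v : Fin k → ℂ, v ≠ 0 → 0 < (star v ⬝ᵥ v).re := by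
    intro v hv
    have := Complex.lt_def.mp (Matrix.dotProduct_star_self_pos_iff.mpr hv)
    simpa using this.1
  set t0 : ℝ := (M-m)^2 * M / (M+m)^2 with ht0_def
  have hspecL : ∀ x ∈ spectrum ℝ L, 0 ≤ x ∧ x ≤ t0 := by
    intro x hx
    obtain ⟨v, hv, heig⟩ := exists_eigvec hLpsd.1 hx
    have hform := form_of_eigvec heig
    have hsv := hvvpos v hv
    have hFre : 0 ≤ (star v ⬝ᵥ L *ᵥ v).re := (Complex.le_def.mp (hLpsd.dotProduct_mulVec_nonneg v)).1
    constructor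
    · by_contra hneg
      push_neg at hneg
      nlinarith [hform, hsv, hFre]
    · have hb := hLform v
      rw [hform] at hb
      rw [ht0_def, le_div_iff₀ (by positivity)]
      nlinarith [hb, hsv]
  have hspecH : ∀ x ∈ spectrum ℝ H, m ≤ x ∧ x ≤ M := by
    intro x hx
    obtain ⟨v, hv, heig⟩ := exists_eigvec hH_herm hx
    have hform := form_of_eigvec heig
    have hsv := hvvpos v hv
    constructor
    · nlinarith [hHlo v, hform, hsv]
    · nlinarith [hHhi v, hform, hsv]
  -- norm bounds via cfc
  have ht00 : 0 ≤ t0 := by positivity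
  have hn1 : ‖cfc (fun x : ℝ => x ^ p) L‖ ≤ t0 ^ p := by
    refine norm_cfc_le (Real.rpow_nonneg ht00 p) fun x hx => ?_
    obtain ⟨hx0, hxt⟩ := hspecL x hx
    rw [Real.norm_eq_abs, abs_of_nonneg (Real.rpow_nonneg hx0 p)]
    exact Real.rpow_le_rpow hx0 hxt hp0.le
  have hn2 : ‖cfc (fun x : ℝ => x ^ (-p)) H‖ ≤ m ^ (-p) := by
    refine norm_cfc_le (Real.rpow_nonneg hm.le _) fun x hx => ?_
    obtain ⟨hx0, hxt⟩ := hspecH x hx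
    have hxpos : 0 < x := hm.trans_le hx0
    rw [Real.norm_eq_abs, abs_of_nonneg (Real.rpow_nonneg hxpos.le _)]
    rw [Real.rpow_neg hxpos.le, Real.rpow_neg hm.le]
    exact inv_anti₀ (Real.rpow_pos_of_pos hm p) (Real.rpow_le_rpow hm.le hx0 hp0.le)
  calc ‖cfc (fun x : ℝ => x ^ p) L * cfc (fun x : ℝ => x ^ (-p)) H‖
      ≤ ‖cfc (fun x : ℝ => x ^ p) L‖ * ‖cfc (fun x : ℝ => x ^ (-p)) H‖ := norm_mul_le _ _
    _ ≤ t0 ^ p * m ^ (-p) := by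
        apply mul_le_mul hn1 hn2 (norm_nonneg _) (Real.rpow_nonneg ht00 p)
    _ = ((M - m) / (M + m)) ^ (2 * p) * (M / m) ^ p :=
        final_alg m M p hm hM hmM hp0
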